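/- If an unsatisfiable CNF formula F has a resolution refutation without weakening steps in length L, width w, and clause space s, then F has a homogeneous resolution refutation (where every resolution step resolves C ∨ x and C ∨ ¬x to C) of length at most 3L, width at most w+1, and clause space at most s+2. -/

import Mathlib

namespace Resolution

/-- A clause: a finite set of literals, a literal being a variable paired with
a polarity. -/
abbrev Clause (X : Type*) := Finset (X × Bool)

/-- A configuration: a finite set of clauses kept in memory. -/
abbrev Config (X : Type*) := Finset (Clause X)

/-- A step of a configuration-style resolution refutation. -/
inductive Step (X : Type*) where
  /-- download of an axiom clause -/
  | ax (C : Clause X)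
  /-- resolution: from B ∨ x and C ∨ ¬x infer B ∨ C -/
  | res (B C : Clause X) (x : X)
  /-- weakening: from B infer B ∨ C -/
  | weak (B C : Clause X)
  /-- erasure of a set of clauses -/
  | erase (S : Finset (Clause X))

variable {X : Type*} [DecidableEq X]

/-- The effect of a step on the memory configuration. -/
def Step.apply : Config X → Step X → Config X
  | M, .ax C => insert C M
  | M, .res B C _ => insert (B ∪ C) M
  | M, .weak B C => insert (B ∪ C) M
  | M, .erase S => M \ S

/-- Legality of a step with respect to the formula `F` and current memory `M`. -/
def Step.ok (F : Finset (Clause X)) (M : Config X) : Step X → Prop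
  | .ax C => C ∈ F
  | .res B C x =>
      insert (x, true) B ∈ M ∧ insert (x, false) C ∈ M ∧
      (x, true) ∉ B ∧ (x, false) ∉ B ∧ (x, true) ∉ C ∧ (x, false) ∉ C
  | .weak B _ => B ∈ M
  | .erase _ => True

/-- Validity of a sequence of steps starting from memory `M`. -/
def Valid (F : Finset (Clause X)) : Config X → List (Step X) → Prop
  | _, [] => True
  | M, s :: rest => Step.ok F M s ∧ Valid F (Step.apply M s) rest

/-- `π` is a resolution refutation of `F`: it is valid starting from the empty
memory and the empty clause is eventually derived. -/
def IsRefutation (F : Finset (Clause X)) (π : List (Step X)) : Prop :=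
  Valid F ∅ π ∧ (∅ : Clause X) ∈ π.foldl Step.apply ∅

/-- The sequence of configurations visited by `π`. -/
def configs (π : List (Step X)) : List (Config X) :=
  π.scanl Step.apply ∅

/-- Length: the number of axiom download and inference steps. -/
def length (π : List (Step X)) : ℕ :=
  (π.filter (fun s => match s with | .erase _ => false | _ => true)).length

/-- Width: the maximal size of a clause appearing in some configuration. -/
def width (π : List (Step X)) : ℕ :=
  ((configs π).map (fun M => M.sup Finset.card)).foldr max 0

/-- Clause space: the maximal number of clauses in a configuration. -/
def space (π : List (Step X)) : ℕ :=
  ((configs π).map Finset.card).foldr max 0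

/-- Variable space: the maximal number of distinct variables in a configuration. -/
def varSpace (π : List (Step X)) : ℕ :=
  ((configs π).map (fun M => (M.sup (fun C => C.image Prod.fst)).card)).foldr max 0

/-- A refutation is homogeneous if every resolution step resolves C ∨ x and
C ∨ ¬x to C. -/
def Homogeneous (π : List (Step X)) : Prop :=
  ∀ s ∈ π, ∀ B C : Clause X, ∀ x : X, s = Step.res B C x → B = C

/-- No weakening steps occur in `π`. -/
def NoWeakening (π : List (Step X)) : Prop :=
  ∀ s ∈ π, ∀ B C : Clause X, s ≠ Step.weak B C

end Resolution



namespace Resolution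
variable {X : Type*} [DecidableEq X]

set_option linter.unusedSectionVars false

def homog : Config X → List (Step X) → List (Step X)
  | _, [] => []
  | M, .ax C :: rest => .ax C :: homog (insert C M) rest
  | M, .weak B C :: rest => .weak B C :: homog (insert (B ∪ C) M) rest
  | M, .erase S :: rest => .erase S :: homog (M \ S) rest
  | M, .res B C x :: rest =>
      .weak (insert (x, true) B) C ::
      .weak (insert (x, false) C) B ::
      .res (B ∪ C) (B ∪ C) x ::
      .erase ({insert (x, true) (B ∪ C), insert (x, false) (B ∪ C)} \ M) ::
      homog (insert (B ∪ C) M) rest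

lemma erase_fix {M : Config X} {D A1 A2 : Clause X} (h1 : D ≠ A1) (h2 : D ≠ A2) :
    insert D (insert A2 (insert A1 M)) \ ({A1, A2} \ M) = insert D M := by
  ext E
  simp only [Finset.mem_sdiff, Finset.mem_insert, Finset.mem_singleton]
  constructor
  · rintro ⟨(rfl | rfl | rfl | hE), hne⟩ <;> tauto
  · rintro (rfl | hE)
    · exact ⟨Or.inl rfl, by tauto⟩
    · exact ⟨by tauto, fun ⟨h, h'⟩ => h' hE⟩

lemma foldr_max_le {l : List ℕ} {w : ℕ} : l.foldr max 0 ≤ w ↔ ∀ a ∈ l, a ≤ w := by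
  induction l with
  | nil => simp
  | cons a l ih => simp [max_le_iff, ih]

lemma length_cons (s : Step X) (l : List (Step X)) :
    Resolution.length (s :: l) =
      (match s with | .erase _ => 0 | _ => 1) + Resolution.length l := by
  cases s <;> simp [Resolution.length, List.filter] <;> omega

lemma mem_scanl_self {α β : Type*} (f : β → α → β) (b : β) (l : List α) :
    b ∈ List.scanl f b l := by
  cases l <;> simp [List.scanl_nil, List.scanl_cons]

lemma master (F : Finset (Clause X)) :
    ∀ (π : List (Step X)) (M : Config X), Valid F M π → NoWeakening π →
    Valid F M (homog M π) ∧
    (homog M π).foldl Step.apply M = π.foldl Step.apply M ∧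
    Homogeneous (homog M π) ∧
    Resolution.length (homog M π) ≤ 3 * Resolution.length π ∧
    (∀ w, (∀ N ∈ π.scanl Step.apply M, N.sup Finset.card ≤ w) →
       ∀ N ∈ (homog M π).scanl Step.apply M, N.sup Finset.card ≤ w + 1) ∧
    (∀ s, (∀ N ∈ π.scanl Step.apply M, N.card ≤ s) →
       ∀ N ∈ (homog M π).scanl Step.apply M, N.card ≤ s + 2) := by
  intro π
  induction π with
  | nil =>
    intro M _ _
    refine ⟨trivial, rfl, fun s hs => absurd hs (List.not_mem_nil (a := s)),
      le_refl _, ?_, ?_⟩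
    · intro w h N hN
      simp only [homog, List.scanl_nil, List.mem_singleton] at hN
      rw [hN]
      exact le_trans (h M (by simp [List.scanl_nil, List.scanl_cons])) (Nat.le_succ w)
    · intro s h N hN
      simp only [homog, List.scanl_nil, List.mem_singleton] at hN
      rw [hN]
      exact le_trans (h M (by simp [List.scanl_nil, List.scanl_cons])) (by omega)
  | cons a rest ih =>
    intro M hv hnw
    have hnw' : NoWeakening rest := fun s hs => hnw s (List.mem_cons_of_mem _ hs)
    cases a with
    | weak B C => exact absurd rfl (hnw _ List.mem_cons_self B C)
    | ax C =>
      obtain ⟨hok, hv'⟩ := hv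
      obtain ⟨h1, h2, h3, h4, h5, h6⟩ := ih (insert C M) hv' hnw'
      refine ⟨⟨hok, h1⟩, h2, ?_, ?_, ?_, ?_⟩
      · intro s hs B' C' x' he
        rcases List.mem_cons.1 hs with hs | hs
        · rw [hs] at he; exact absurd he (by simp)
        · exact h3 s hs B' C' x' he
      · show Resolution.length (.ax C :: homog (insert C M) rest) ≤ _
        simp only [length_cons]
        omega
      · intro w h N hN
        simp only [homog, List.scanl_cons, List.singleton_append, List.mem_cons] at hN
        rcases hN with hN | hN
        · rw [hN]; exact le_trans (h M (by simp [List.scanl_nil, List.scanl_cons])) (Nat.le_succ w)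
        · exact h5 w (fun N' hN' => h N'
            (by simp only [List.scanl_cons, List.mem_cons]; exact Or.inr hN')) N hN
      · intro s h N hN
        simp only [homog, List.scanl_cons, List.singleton_append, List.mem_cons] at hN
        rcases hN with hN | hN
        · rw [hN]; exact le_trans (h M (by simp [List.scanl_nil, List.scanl_cons])) (by omega)
        · exact h6 s (fun N' hN' => h N'
            (by simp only [List.scanl_cons, List.mem_cons]; exact Or.inr hN')) N hN
    | erase S =>
      obtain ⟨hok, hv'⟩ := hv
      obtain ⟨h1, h2, h3, h4, h5, h6⟩ := ih (M \ S) hv' hnw'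
      refine ⟨⟨trivial, h1⟩, h2, ?_, ?_, ?_, ?_⟩
      · intro s hs B' C' x' he
        rcases List.mem_cons.1 hs with hs | hs
        · rw [hs] at he; exact absurd he (by simp)
        · exact h3 s hs B' C' x' he
      · show Resolution.length (.erase S :: homog (M \ S) rest) ≤ _
        simp only [length_cons]
        omega
      · intro w h N hN
        simp only [homog, List.scanl_cons, List.singleton_append, List.mem_cons] at hN
        rcases hN with hN | hN
        · rw [hN]; exact le_trans (h M (by simp [List.scanl_nil, List.scanl_cons])) (Nat.le_succ w)
        · exact h5 w (fun N' hN' => h N'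
            (by simp only [List.scanl_cons, List.mem_cons]; exact Or.inr hN')) N hN
      · intro s h N hN
        simp only [homog, List.scanl_cons, List.singleton_append, List.mem_cons] at hN
        rcases hN with hN | hN
        · rw [hN]; exact le_trans (h M (by simp [List.scanl_nil, List.scanl_cons])) (by omega)
        · exact h6 s (fun N' hN' => h N'
            (by simp only [List.scanl_cons, List.mem_cons]; exact Or.inr hN')) N hN
    | res B C x =>
      obtain ⟨hok, hv'⟩ := hv
      obtain ⟨hB1, hC1, hB2, hB3, hC2, hC3⟩ := hok
      set D : Clause X := B ∪ C with hD
      set A1 : Clause X := insert (x, true) D with hA1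
      set A2 : Clause X := insert (x, false) D with hA2
      have hxD : (x, true) ∉ D := by simp [hD, hB2, hC2]
      have hxD' : (x, false) ∉ D := by simp [hD, hB3, hC3]
      have e1 : (insert (x, true) B) ∪ C = A1 := by
        rw [hA1, hD, Finset.insert_union]
      have e2 : (insert (x, false) C) ∪ B = A2 := by
        rw [hA2, hD, Finset.union_comm B C, Finset.insert_union]
      have e3 : D ∪ D = D := Finset.union_self D
      have hDA1 : D ≠ A1 := fun h => hxD (h ▸ Finset.mem_insert_self _ _)
      have hDA2 : D ≠ A2 := fun h => hxD' (h ▸ Finset.mem_insert_self _ _)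
      have key : (insert D (insert A2 (insert A1 M))) \ ({A1, A2} \ M)
          = insert D M := erase_fix hDA1 hDA2
      obtain ⟨h1, h2, h3, h4, h5, h6⟩ := ih (insert D M) hv' hnw'
      have app1 : Step.apply M (.weak (insert (x, true) B) C) = insert A1 M := by
        simp [Step.apply, e1]
      have app2 : Step.apply (insert A1 M) (.weak (insert (x, false) C) B)
          = insert A2 (insert A1 M) := by simp [Step.apply, e2]
      have app3 : Step.apply (insert A2 (insert A1 M)) (.res D D x)
          = insert D (insert A2 (insert A1 M)) := by simp [Step.apply, e3]
      have app4 : Step.apply (insert D (insert A2 (insert A1 M)))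
          (.erase ({A1, A2} \ M)) = insert D M := by simp [Step.apply, key]
      have app3' : Step.apply (insert A2 (insert A1 M)) (.res (B ∪ C) (B ∪ C) x)
          = insert D (insert A2 (insert A1 M)) := app3
      have app4' : Step.apply (insert D (insert A2 (insert A1 M)))
          (.erase ({insert (x, true) (B ∪ C), insert (x, false) (B ∪ C)} \ M)) = insert D M := app4
      refine ⟨?_, ?_, ?_, ?_, ?_, ?_⟩
      · -- Valid
        refine ⟨hB1, ?_⟩
        rw [app1]
        refine ⟨Finset.mem_insert_of_mem hC1, ?_⟩
        rw [app2]
        refine ⟨⟨?_, ?_, hxD, hxD', hxD, hxD'⟩, ?_⟩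
        · exact Finset.mem_insert_of_mem (Finset.mem_insert_self _ _)
        · exact Finset.mem_insert_self _ _
        rw [app3]
        exact ⟨trivial, by rw [app4]; exact h1⟩
      · -- foldl
        show List.foldl _ _ _ = _
        simp only [homog, List.foldl, app1, app2, app3, app4, app3', app4']
        exact h2
      · -- Homogeneous
        intro s hs B' C' x' he
        simp only [homog, List.mem_cons] at hs
        rcases hs with rfl | rfl | rfl | rfl | hs
        · exact absurd he (by simp)
        · exact absurd he (by simp)
        · cases he; rfl
        · exact absurd he (by simp)
        · exact h3 s hs B' C' x' he
      · -- length
        show Resolution.length (_ :: _ :: _ :: _ :: homog (insert D M) rest) ≤ _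
        simp only [length_cons]
        omega
      · -- width
        intro w h N hN
        have hM : M.sup Finset.card ≤ w := h M (by simp [List.scanl_nil, List.scanl_cons])
        have hDM : (insert D M).sup Finset.card ≤ w := by
          refine h (insert D M) ?_
          simp only [List.scanl_cons, List.singleton_append, Step.apply, List.mem_cons]
          refine Or.inr ?_
          rw [← hD]
          exact mem_scanl_self _ _ _
        have hDc : D.card ≤ w :=
          le_trans (Finset.le_sup (Finset.mem_insert_self D M)) hDM
        have hA1c : A1.card ≤ w + 1 :=
          le_trans (Finset.card_insert_le _ _) (by omega)
        have hA2c : A2.card ≤ w + 1 :=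
          le_trans (Finset.card_insert_le _ _) (by omega)
        simp only [homog, List.scanl_cons, List.singleton_append, app1, app2, app3, app4, app3', app4', List.mem_cons] at hN
        rcases hN with hN | hN | hN | hN | hN
        · rw [hN]; omega
        · rw [hN]; simp only [Finset.sup_insert, sup_le_iff]
          exact ⟨hA1c, by omega⟩
        · rw [hN]; simp only [Finset.sup_insert, sup_le_iff]
          exact ⟨hA2c, hA1c, by omega⟩
        · rw [hN]; simp only [Finset.sup_insert, sup_le_iff]
          exact ⟨by omega, hA2c, hA1c, by omega⟩
        · rw [← hD] at hN
          refine h5 w ?_ N hN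
          intro N' hN'
          refine h N' ?_
          simp only [List.scanl_cons, List.singleton_append, Step.apply, List.mem_cons]
          exact Or.inr hN'
      · -- space
        intro s h N hN
        have hM : M.card ≤ s := h M (by simp [List.scanl_nil, List.scanl_cons])
        have hDM : (insert D M).card ≤ s := by
          refine h (insert D M) ?_
          simp only [List.scanl_cons, List.singleton_append, Step.apply, List.mem_cons]
          refine Or.inr ?_
          rw [← hD]
          exact mem_scanl_self _ _ _
        simp only [homog, List.scanl_cons, List.singleton_append, app1, app2, app3, app4, app3', app4', List.mem_cons] at hN
        rcases hN with hN | hN | hN | hN | hN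
        · rw [hN]; omega
        · rw [hN]; have := Finset.card_insert_le A1 M; omega
        · rw [hN]
          have h1' := Finset.card_insert_le A2 (insert A1 M)
          have h2' := Finset.card_insert_le A1 M
          omega
        · rw [hN]
          calc (insert D (insert A2 (insert A1 M))).card
              = (insert A2 (insert A1 (insert D M))).card := by
                congr 1; ext E
                simp only [Finset.mem_insert]; tauto
            _ ≤ (insert A1 (insert D M)).card + 1 := Finset.card_insert_le _ _
            _ ≤ (insert D M).card + 2 := by
                have := Finset.card_insert_le A1 (insert D M); omega
            _ ≤ s + 2 := by omega
        · rw [← hD] at hN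
          refine h6 s ?_ N hN
          intro N' hN'
          refine h N' ?_
          simp only [List.scanl_cons, List.singleton_append, Step.apply, List.mem_cons]
          exact Or.inr hN'

end Resolution

open Resolution

/-- a refutation without weakening of length L, width w and clause
space s can be turned into a homogeneous refutation of length at most 3L, width
at most w+1 and clause space at most s+2. -/
theorem stmt8 {X : Type*} [DecidableEq X] (F : Finset (Clause X))
    (π : List (Step X)) (L w s : ℕ)
    (href : IsRefutation F π) (hnw : NoWeakening π)
    (hL : Resolution.length π ≤ L) (hw : width π ≤ w) (hs : space π ≤ s) :
    ∃ π' : List (Step X), IsRefutation F π' ∧ Homogeneous π' ∧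
      Resolution.length π' ≤ 3 * L ∧ width π' ≤ w + 1 ∧ space π' ≤ s + 2 := by
  obtain ⟨hval, hmem⟩ := href
  obtain ⟨h1, h2, h3, h4, h5, h6⟩ := Resolution.master F π ∅ hval hnw
  have hw' : ∀ N ∈ π.scanl Step.apply ∅, N.sup Finset.card ≤ w := by
    intro N hN
    exact Resolution.foldr_max_le.1 hw _ (List.mem_map_of_mem hN)
  have hs' : ∀ N ∈ π.scanl Step.apply ∅, N.card ≤ s := by
    intro N hN
    exact Resolution.foldr_max_le.1 hs _ (List.mem_map_of_mem hN)
  refine ⟨Resolution.homog ∅ π, ⟨h1, by rw [h2]; exact hmem⟩, h3,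
    le_trans h4 (by omega), ?_, ?_⟩
  · refine Resolution.foldr_max_le.2 ?_
    intro a ha
    rcases List.mem_map.1 ha with ⟨N, hN, rfl⟩
    exact h5 w hw' N hN
  · refine Resolution.foldr_max_le.2 ?_
    intro a ha
    rcases List.mem_map.1 ha with ⟨N, hN, rfl⟩
    exact h6 s hs' N hN
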